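/- Let R be a ring such that R/J(R) is unit-regular and idempotents lift modulo J(R). If M is a module with End(M) ≅ R, then M satisfies internal cancellation: whenever M = A₁ ⊕ B₁ = A₂ ⊕ B₂ with A₁ ≅ A₂, then B₁ ≅ B₂. -/

import Mathlib

section RingLemmas

variable {S : Type*} [Ring S]

private lemma IC.isUnit_of_left_right {a l r : S} (hl : l * a = 1) (hr : a * r = 1) :
    IsUnit a := by
  have hlr : l = r := by
    calc l = l * (a * r) := by rw [hr, mul_one]
    _ = (l * a) * r := by rw [mul_assoc]
    _ = r := by rw [hl, one_mul]
  exact isUnit_iff_exists.mpr ⟨r, hr, hlr ▸ hl⟩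

private lemma IC.isUnit_one_add_mul_mem {j : S} (hj : j ∈ Ideal.jacobson (⊥ : Ideal S))
    (y : S) : IsUnit (y * j + 1) := by
  obtain ⟨z, hz⟩ := Ideal.mem_jacobson_iff.1 hj y
  rw [Ideal.mem_bot, sub_eq_zero] at hz
  have hz1 : z * (y * j + 1) = 1 := by
    calc z * (y * j + 1) = z * y * j + z := by noncomm_ring
    _ = 1 := hz
  have hzform : z = (-(z * y)) * j + 1 := by
    have h1 : z = 1 - z * y * j := by rw [eq_sub_iff_add_eq, add_comm]; exact hz
    calc z = 1 - z * y * j := h1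
    _ = (-(z * y)) * j + 1 := by noncomm_ring
  obtain ⟨t, ht⟩ := Ideal.mem_jacobson_iff.1 hj (-(z * y))
  rw [Ideal.mem_bot, sub_eq_zero] at ht
  have ht1 : t * z = 1 := by
    rw [hzform]
    calc t * ((-(z * y)) * j + 1) = t * (-(z * y)) * j + t := by noncomm_ring
    _ = 1 := ht
  have hw : t = y * j + 1 := by
    calc t = t * (z * (y * j + 1)) := by rw [hz1, mul_one]
    _ = (t * z) * (y * j + 1) := by rw [mul_assoc]
    _ = y * j + 1 := by rw [ht1, one_mul]
  exact IC.isUnit_of_left_right hz1 (hw ▸ ht1)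

private lemma IC.isUnit_one_sub_of_sq_mem {n : S}
    (hn : n * n ∈ Ideal.jacobson (⊥ : Ideal S)) : IsUnit (1 - n) := by
  have h1 : IsUnit ((-1 : S) * (n * n) + 1) := IC.isUnit_one_add_mul_mem hn (-1)
  obtain ⟨u, hu⟩ := h1
  have hval : (u : S) = 1 - n * n := by rw [hu]; noncomm_ring
  have hr : (1 - n) * ((1 + n) * ↑u⁻¹) = 1 := by
    have : (1 - n) * (1 + n) = (u : S) := by rw [hval]; noncomm_ring
    rw [← mul_assoc, this, Units.mul_inv]
  have hl : (↑u⁻¹ * (1 + n)) * (1 - n) = 1 := by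
    have : (1 + n) * (1 - n) = (u : S) := by rw [hval]; noncomm_ring
    rw [mul_assoc, this, Units.inv_mul]
  exact IC.isUnit_of_left_right hl hr

private lemma IC.jac_mul_right {a b : S} (h : a ∈ Ideal.jacobson (⊥ : Ideal S)) :
    a * b ∈ Ideal.jacobson (⊥ : Ideal S) :=
  Ideal.mul_mem_right b _ h

/-- In a ring whose quotient by the Jacobson radical is unit-regular, every
(von Neumann) regular element is unit-regular. -/
private lemma IC.unit_regular_of_regular
    (hur : ∀ x : S, ∃ u : Sˣ, x * (u : S) * x - x ∈ Ideal.jacobson (⊥ : Ideal S))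
    (a x : S) (hax : a * x * a = a) : ∃ v : Sˣ, a * (v : S) * a = a := by
  obtain ⟨u, hu⟩ := hur a
  -- n := a*x*(1 - a*u) has square in the radical
  have hnn : (a * x * (1 - a * ↑u)) * (a * x * (1 - a * ↑u)) ∈ Ideal.jacobson (⊥ : Ideal S) := by
    have heq : (a * x * (1 - a * ↑u)) * (a * x * (1 - a * ↑u))
        = ((a * x) * (-(a * ↑u * a - a))) * (x * (1 - a * ↑u)) := by noncomm_ring
    rw [heq]
    exact IC.jac_mul_right (Ideal.mul_mem_left _ _ (neg_mem hu))
  obtain ⟨w, hwv⟩ := IC.isUnit_one_sub_of_sq_mem hnn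
  have hkey : a * x * (1 - a * x * (1 - a * ↑u)) = a * ↑u := by
    have hh : a * x * (1 - a * x * (1 - a * ↑u))
        = a * x - (a * x * a) * x + ((a * x * a) * x * a) * ↑u := by noncomm_ring
    rw [hax, hax] at hh
    rw [hh]; noncomm_ring
  have hfin : a * x * (↑w * ↑(u⁻¹)) = a := by
    rw [hwv, ← mul_assoc, hkey, mul_assoc, Units.mul_inv, mul_one]
  refine ⟨(w * u⁻¹)⁻¹, ?_⟩
  have hfin' : a * x * ↑(w * u⁻¹) = a := by rw [Units.val_mul]; exact hfin
  calc a * ↑(w * u⁻¹)⁻¹ * a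
      = (a * x * ↑(w * u⁻¹)) * ↑(w * u⁻¹)⁻¹ * a := by rw [hfin']
    _ = a * x * (↑(w * u⁻¹) * ↑(w * u⁻¹)⁻¹) * a := by noncomm_ring
    _ = a * x * a := by rw [Units.mul_inv, mul_one]
    _ = a := hax

end RingLemmas

section ModuleLemmas

variable {R M : Type*} [Ring R] [AddCommGroup M] [Module R M]

private lemma IC.isCompl_range_ker (f : M →ₗ[R] M) (h : ∀ m, f (f m) = f m) :
    IsCompl (LinearMap.range f) (LinearMap.ker f) := by
  constructor
  · rw [Submodule.disjoint_def]
    rintro m ⟨y, rfl⟩ hk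
    rw [LinearMap.mem_ker] at hk
    rw [← h y, hk]
  · rw [codisjoint_iff, eq_top_iff]
    intro m _
    rw [Submodule.mem_sup]
    exact ⟨f m, ⟨m, rfl⟩, m - f m,
      by rw [LinearMap.mem_ker, map_sub, h, sub_self], by abel⟩

end ModuleLemmas

/-- If S is a ring with S/J(S) unit-regular and idempotents lifting modulo J(S),
then any module M with End(M) ≅ S satisfies internal cancellation. -/
theorem stmt14 {S : Type*} [Ring S]
    (hur : ∀ x : S, ∃ u : Sˣ, x * (u : S) * x - x ∈ Ideal.jacobson (⊥ : Ideal S))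
    (hlift : ∀ e' : S, e' * e' - e' ∈ Ideal.jacobson (⊥ : Ideal S) →
      ∃ e : S, e * e = e ∧ e - e' ∈ Ideal.jacobson (⊥ : Ideal S))
    {R M : Type*} [Ring R] [AddCommGroup M] [Module R M]
    (hiso : Nonempty (Module.End R M ≃+* S)) :
    ∀ (A₁ B₁ A₂ B₂ : Submodule R M), IsCompl A₁ B₁ → IsCompl A₂ B₂ →
      Nonempty (↥A₁ ≃ₗ[R] ↥A₂) → Nonempty (↥B₁ ≃ₗ[R] ↥B₂) := by
  intro A₁ B₁ A₂ B₂ h₁ h₂ hA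
  obtain ⟨φ⟩ := hiso
  obtain ⟨g⟩ := hA
  -- the endomorphism a : M → A₁ →(g) A₂ ↪ M, and a quasi-inverse x
  set a : Module.End R M :=
    A₂.subtype ∘ₗ ((g : ↥A₁ →ₗ[R] ↥A₂) ∘ₗ Submodule.projectionOnto A₁ B₁ h₁) with ha
  set x : Module.End R M :=
    A₁.subtype ∘ₗ ((g.symm : ↥A₂ →ₗ[R] ↥A₁) ∘ₗ Submodule.projectionOnto A₂ B₂ h₂) with hx
  have hax : a * x * a = a := by
    ext m
    simp [ha, hx, Module.End.mul_apply, -Submodule.coe_projectionOnto_apply]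
  -- transfer to S, get a unit-regular decomposition, and pull it back
  have hax' : φ a * φ x * φ a = φ a := by rw [← map_mul, ← map_mul, hax]
  obtain ⟨v, hv⟩ := IC.unit_regular_of_regular hur (φ a) (φ x) hax'
  obtain ⟨W, hW⟩ : IsUnit (φ.symm (v : S)) := v.isUnit.map (φ.symm : S →+* Module.End R M)
  have haWa : a * ↑W * a = a := by
    apply φ.injective
    rw [map_mul, map_mul, hW, RingEquiv.apply_symm_apply]
    exact hv
  -- the idempotent f = W ∘ a
  have hWbij : Function.Bijective (W : Module.End R M) :=
    (Module.End.isUnit_iff _).mp W.isUnit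
  set f : Module.End R M := ↑W * a with hfdef
  have hidem : ∀ m, f (f m) = f m := by
    intro m
    have : f * f = f := by
      have hassoc : f * f = ↑W * (a * ↑W * a) := by rw [hfdef]; noncomm_ring
      rw [hassoc, haWa]
    conv_lhs => rw [← Module.End.mul_apply, this]
  have hcompl : IsCompl (LinearMap.range f) (LinearMap.ker f) :=
    IC.isCompl_range_ker f hidem
  -- identify kernel and range
  have hkera : LinearMap.ker a = B₁ := by
    ext m
    simp [ha, LinearMap.mem_ker, Submodule.coe_eq_zero]
  have hkerf : LinearMap.ker f = B₁ := by
    rw [← hkera]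
    ext m
    simp only [LinearMap.mem_ker, hfdef, Module.End.mul_apply]
    exact ⟨fun h => hWbij.injective (by simpa using h), fun h => by rw [h, map_zero]⟩
  have hrangea : LinearMap.range a = A₂ := by
    apply le_antisymm
    · rintro _ ⟨m, rfl⟩
      simp [ha]
    · intro m hm
      refine ⟨(g.symm ⟨m, hm⟩ : M), ?_⟩
      simp [ha]
  -- W as a linear equivalence
  set Weq : M ≃ₗ[R] M := LinearEquiv.ofBijective (W : Module.End R M) hWbij with hWeq
  have hrangef : A₂.map (Weq : M →ₗ[R] M) = LinearMap.range f := by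
    rw [hfdef, Module.End.mul_eq_comp, LinearMap.range_comp, hrangea]
    rfl
  -- assemble the equivalence B₁ ≃ B₂
  have e1 : (M ⧸ A₂) ≃ₗ[R] ↥B₂ := Submodule.quotientEquivOfIsCompl A₂ B₂ h₂
  have e2 : (M ⧸ A₂) ≃ₗ[R] (M ⧸ LinearMap.range f) :=
    Submodule.Quotient.equiv A₂ (LinearMap.range f) Weq hrangef
  have e3 : (M ⧸ LinearMap.range f) ≃ₗ[R] ↥B₁ :=
    Submodule.quotientEquivOfIsCompl _ _ (hkerf ▸ hcompl)
  exact ⟨(e3.symm.trans e2.symm).trans e1⟩
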